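/- Let φ, φ′ ∈ N′ and suppose x₁ ∈ φ ∩ φ′ satisfies f_φ(x₁) < f_{φ′}(x₁). Define recursively x_{i+1} = h_c(φ, x_i) if x_i ∈ φ and x_{i+1} = x_i otherwise, when i is odd; and x_{i+1} = h_c(φ′, x_i) if x_i ∈ φ′ and x_{i+1} = x_i otherwise, when i is even. Let i₀ = min{i ≥ 1 : x_i ∉ φ ∩ φ′}. Then the spatial positions of (x_i)_{1 ≤ i ≤ i₀} form an f_φ(x₁)-bounded anisotropic descending chain of pairwise distinct elements. Additionally, f_φ(x_i) < f_{φ′}(x_i) whenever i ∈ {1, …, i₀ − 1} is odd, and f_{φ′}(x_i) < f_φ(x_i) whenever i ∈ {1, …, i₀ − 1} is even. In particular, since φ and φ′ contain no infinite anisotropic descending chain, i₀ < ∞. -/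
import Mathlib


noncomputable section

namespace Lilypond

open scoped ENNReal

/-- Marked points: a spatial position in `ℝ² = ℝ × ℝ` (with the supremum norm)
together with a mark, which is a direction vector in `ℝ²`. -/
abbrev Pt : Type := (ℝ × ℝ) × (ℝ × ℝ)

def e1 : ℝ × ℝ := (1, 0)
def e2 : ℝ × ℝ := (0, 1)

/-- The mark space `M = {e₁, −e₁, e₂, −e₂}`. -/
def Mset : Set (ℝ × ℝ) := {e1, -e1, e2, -e2}

/-- The Euclidean norm on `ℝ²` (the norm of `ℝ × ℝ` itself is the sup-norm `|·|_∞`). -/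
def eNorm (p : ℝ × ℝ) : ℝ := Real.sqrt (p.1 ^ 2 + p.2 ^ 2)

/-- The eight forbidden directions `{±e₁, ±e₂, (±e₁ ± e₂)/√2}`. -/
def badDirs : Set (ℝ × ℝ) :=
  {e1, -e1, e2, -e2, (Real.sqrt 2)⁻¹ • (e1 + e2), (Real.sqrt 2)⁻¹ • (e1 - e2),
    (Real.sqrt 2)⁻¹ • (-e1 + e2), (Real.sqrt 2)⁻¹ • (-e1 - e2)}

/-- The set of spatial positions of a marked configuration. -/
def pos (φ : Set Pt) : Set (ℝ × ℝ) := Prod.fst '' φ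

/-- `A` contains an (infinite) anisotropic descending chain: there are `b > 0` and pairwise
distinct points `ξ₀, ξ₁, ξ₂, …` of `A` with `|ξ₀ − ξ₁|_∞ ≤ b` and
`|ξ_{i+1} − ξ_i|_∞ < |ξ_i − ξ_{i−1}|_∞` for all `i ≥ 1`. -/
def HasInfDescChain (A : Set (ℝ × ℝ)) : Prop :=
  ∃ b > (0 : ℝ), ∃ ξ : ℕ → ℝ × ℝ, Function.Injective ξ ∧ (∀ i, ξ i ∈ A) ∧
    ‖ξ 0 - ξ 1‖ ≤ b ∧ ∀ i, 1 ≤ i → ‖ξ (i + 1) - ξ i‖ < ‖ξ i - ξ (i - 1)‖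

/-- Local finiteness of a marked configuration. -/
def LocFin (φ : Set Pt) : Prop := ∀ r : ℝ, {x ∈ φ | ‖x.1‖ ≤ r}.Finite

/-- A marked set `φ ⊂ ℝ² × M` is admissible: it is locally finite, all marks lie in `M`,
its set of spatial positions contains no anisotropic descending chain, and
`(ξ − η)/|ξ − η| ∉ {±e₁, ±e₂, (±e₁ ± e₂)/√2}` (Euclidean normalization) for all distinct
`x = (ξ,v), y = (η,w) ∈ φ`. -/
def Admissible (φ : Set Pt) : Prop :=
  LocFin φ ∧ (∀ x ∈ φ, x.2 ∈ Mset) ∧ ¬ HasInfDescChain (pos φ) ∧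
    ∀ x ∈ φ, ∀ y ∈ φ, x ≠ y → (eNorm (x.1 - y.1))⁻¹ • (x.1 - y.1) ∉ badDirs

/-- The half-open growth segment `[ξ, ξ + l·v)`, interpreted as the full ray
`ξ + [0,∞)·v` when `l = ∞`. -/
def seg (ξ v : ℝ × ℝ) (l : ℝ≥0∞) : Set (ℝ × ℝ) :=
  {p | ∃ t : ℝ, 0 ≤ t ∧ ENNReal.ofReal t < l ∧ p = ξ + t • v}

/-- The tip `ξ + f(x)·v` of the (finite) segment grown from `x = (ξ, v)`. -/
def tip (f : Pt → ℝ≥0∞) (x : Pt) : ℝ × ℝ := x.1 + (f x).toReal • x.2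

/-- `y = (η, w)` is a stopping neighbor of `x = (ξ, v)` in `φ` (w.r.t. the growth
function `f`): `y ∈ φ`, `ξ + f(x)v ∈ [η, η + f(y)w)` and `|ξ + f(x)v − η| < f(x)`
(Euclidean norm). -/
def IsStopNbr (φ : Set Pt) (f : Pt → ℝ≥0∞) (x y : Pt) : Prop :=
  y ∈ φ ∧ tip f x ∈ seg y.1 y.2 (f y) ∧ eNorm (tip f x - y.1) < (f x).toReal

/-- `f` is a growth function for `φ`: the half-open segments `[ξ, ξ + f(x)v)` are pairwise
disjoint (hard-core property), every `x ∈ φ` with `f(x) < ∞` has a unique stopping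
neighbor, and (as a normalization identifying `f` with a function on `φ`) `f` vanishes
off `φ`. -/
def IsGrowthFn (φ : Set Pt) (f : Pt → ℝ≥0∞) : Prop :=
  (∀ x ∈ φ, ∀ y ∈ φ, x ≠ y → seg x.1 x.2 (f x) ∩ seg y.1 y.2 (f y) = ∅) ∧
  (∀ x ∈ φ, f x ≠ ⊤ → ∃! y, IsStopNbr φ f x y) ∧
  (∀ x, x ∉ φ → f x = 0)

open Classical in
/-- The growth function `f_φ` of a configuration (chosen by choice; it is unique on
admissible configurations). -/
def growthFn (φ : Set Pt) : Pt → ℝ≥0∞ :=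
  if h : ∃ f, IsGrowthFn φ f then h.choose else fun _ => 0

/-- `N′`: nonempty admissible configurations possessing a growth function which is
finite everywhere on the configuration. -/
def Nprime (φ : Set Pt) : Prop :=
  φ.Nonempty ∧ Admissible φ ∧ (∃ f, IsGrowthFn φ f) ∧ ∀ x ∈ φ, growthFn φ x ≠ ⊤

open Classical in
/-- The combinatorial descendant `h_c(φ, x)`: the (unique) stopping neighbor of `x`
in `φ`. -/
def hc (φ : Set Pt) (x : Pt) : Pt :=
  if h : ∃ y, IsStopNbr φ (growthFn φ) x y then h.choose else x

/-- The geometric descendant `h_g(φ, x) = ξ + f_φ(x)·v`. -/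
def hg (φ : Set Pt) (x : Pt) : ℝ × ℝ := tip (growthFn φ) x

/-- The closed segment `I(φ, x) = [ξ, h_g(φ, x)]`. -/
def I (φ : Set Pt) (x : Pt) : Set (ℝ × ℝ) := segment ℝ x.1 (hg φ x)


lemma growthFn_isGF {φ : Set Pt} (h : ∃ f, IsGrowthFn φ f) : IsGrowthFn φ (growthFn φ) := by
  rw [growthFn, dif_pos h]; exact h.choose_spec

lemma mset_ne_zero {v : ℝ × ℝ} (h : v ∈ Mset) : v ≠ 0 := by
  simp only [Mset, Set.mem_insert_iff, Set.mem_singleton_iff] at h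
  rcases h with rfl | rfl | rfl | rfl <;> simp [e1, e2, Prod.ext_iff]

lemma eNorm_smul_mset {v : ℝ × ℝ} (h : v ∈ Mset) (t : ℝ) : eNorm (t • v) = |t| := by
  simp only [Mset, Set.mem_insert_iff, Set.mem_singleton_iff] at h
  rcases h with rfl | rfl | rfl | rfl <;>
    · simp [eNorm, e1, e2, Prod.smul_def]
      ring_nf
      rw [Real.sqrt_sq_eq_abs]

lemma neg_mem_badDirs {v : ℝ × ℝ} (h : v ∈ Mset) : -v ∈ badDirs := by
  simp only [Mset, Set.mem_insert_iff, Set.mem_singleton_iff] at h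
  rcases h with rfl | rfl | rfl | rfl <;> simp [badDirs]

lemma normalized_neg {c : ℝ} (hc : c < 0) {v : ℝ × ℝ} (h : v ∈ Mset) :
    (eNorm (c • v))⁻¹ • (c • v) = -v := by
  rw [eNorm_smul_mset h, smul_smul, abs_of_neg hc]
  have hne : c ≠ 0 := ne_of_lt hc
  have : (-c)⁻¹ * c = -1 := by
    rw [← neg_inv, neg_mul, inv_mul_cancel₀ hne]
  rw [this, neg_one_smul]

lemma mset_cases {v w : ℝ × ℝ} (hv : v ∈ Mset) (hw : w ∈ Mset) :
    w = v ∨ w = -v ∨ (∀ a b : ℝ, ‖a • v + b • w‖ = max |a| |b|) := by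
  simp only [Mset, Set.mem_insert_iff, Set.mem_singleton_iff] at hv hw
  rcases hv with rfl | rfl | rfl | rfl <;> rcases hw with rfl | rfl | rfl | rfl <;>
    first
      | (left; rfl)
      | (right; left; rfl)
      | (right; left; rw [neg_neg]; done)
      | (right; right; intro a b;
         simp [e1, e2, Prod.norm_def, Prod.smul_def, Prod.ext_iff, Real.norm_eq_abs,
           abs_neg, max_comm])

lemma growthFn_pos {φ : Set Pt} (hφ : Nprime φ) {z : Pt} (hz : z ∈ φ) : 0 < growthFn φ z := by
  obtain ⟨-, -, hex, hfin⟩ := hφ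
  obtain ⟨y, hy⟩ := ((growthFn_isGF hex).2.1 z hz (hfin z hz)).exists
  have h := hy.2.2
  have h0 : (0:ℝ) ≤ eNorm (tip (growthFn φ) z - y.1) := Real.sqrt_nonneg _
  have : 0 < (growthFn φ z).toReal := lt_of_le_of_lt h0 h
  exact (ENNReal.toReal_pos_iff.mp this).1

lemma hc_spec {φ : Set Pt} (hφ : Nprime φ) {z : Pt} (hz : z ∈ φ) :
    IsStopNbr φ (growthFn φ) z (hc φ z) := by
  have h := ((growthFn_isGF hφ.2.2.1).2.1 z hz (hφ.2.2.2 z hz)).exists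
  rw [hc, dif_pos h]; exact h.choose_spec

lemma pos_ne {φ : Set Pt} (hφ : Nprime φ) {z y : Pt} (hz : z ∈ φ) (hy : y ∈ φ)
    (hne : z ≠ y) : z.1 ≠ y.1 := by
  intro he
  have hd := (growthFn_isGF hφ.2.2.1).1 z hz y hy hne
  have h1 : z.1 ∈ seg z.1 z.2 (growthFn φ z) :=
    ⟨0, le_refl _, by simpa using growthFn_pos hφ hz, by simp⟩
  have h2 : z.1 ∈ seg y.1 y.2 (growthFn φ y) :=
    ⟨0, le_refl _, by simpa using growthFn_pos hφ hy, by simp [he]⟩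
  exact Set.eq_empty_iff_forall_notMem.mp hd z.1 ⟨h1, h2⟩

lemma claimB {φ : Set Pt} (hφ : Nprime φ) {z : Pt} (hz : z ∈ φ) :
    hc φ z ∈ φ ∧ z ≠ hc φ z ∧
    ‖z.1 - (hc φ z).1‖ = (growthFn φ z).toReal ∧
    ∃ t : ℝ, 0 ≤ t ∧ t < (growthFn φ z).toReal ∧ ENNReal.ofReal t < growthFn φ (hc φ z) ∧
      tip (growthFn φ) z = (hc φ z).1 + t • (hc φ z).2 := by
  set y := hc φ z with hy
  set s := (growthFn φ z).toReal with hs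
  obtain ⟨hyφ, ⟨t, ht0, htf, htp⟩, hnlt⟩ := hc_spec hφ hz
  have hvM : z.2 ∈ Mset := hφ.2.1.2.1 z hz
  have hwM : y.2 ∈ Mset := hφ.2.1.2.1 y hyφ
  -- t < s
  have hsub : tip (growthFn φ) z - y.1 = t • y.2 := by rw [htp]; abel
  have hts : t < s := by
    have := hnlt
    rw [hsub, eNorm_smul_mset hwM, abs_of_nonneg ht0] at this
    exact this
  have hs0 : 0 < s := lt_of_le_of_lt ht0 hts
  -- z ≠ y
  rw [← hy] at htp hnlt
  have hne : z ≠ y := by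
    intro he
    rw [tip, ← hs, ← he] at htp
    have h1 : s • z.2 = t • z.2 := add_left_cancel htp
    have h2 : (s - t) • z.2 = (0 : ℝ × ℝ) := by rw [sub_smul, h1, sub_self]
    rcases smul_eq_zero.mp h2 with h | h
    · exact absurd h (by intro hh; rw [sub_eq_zero] at hh; linarith)
    · exact mset_ne_zero hvM h
  -- difference vector
  have hdv : z.1 - y.1 = (-s) • z.2 + t • y.2 := by
    rw [tip, ← hs] at htp
    rw [eq_sub_of_add_eq htp, neg_smul]
    abel
  rcases mset_cases hvM hwM with hpar | hpar | horth
  · -- w = v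
    exfalso
    have hc' : z.1 - y.1 = (t - s) • z.2 := by rw [hdv, hpar, sub_smul, neg_smul]; abel
    have hdir := hφ.2.1.2.2.2 z hz y hyφ hne
    rw [hc', normalized_neg (by linarith) hvM] at hdir
    exact hdir (neg_mem_badDirs hvM)
  · -- w = -v
    exfalso
    have hc' : z.1 - y.1 = (-(t + s)) • z.2 := by rw [hdv, hpar]; module
    have hdir := hφ.2.1.2.2.2 z hz y hyφ hne
    rw [hc', normalized_neg (by linarith) hvM] at hdir
    exact hdir (neg_mem_badDirs hvM)
  · -- orthogonal
    have hnorm : ‖z.1 - y.1‖ = s := by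
      rw [hdv, horth, abs_neg, abs_of_nonneg hs0.le, abs_of_nonneg ht0,
        max_eq_left hts.le]
    exact ⟨hyφ, hne, hnorm, t, ht0, hts, htf, htp⟩

lemma step {φ φ' : Set Pt} (hφ : Nprime φ) (hφ' : Nprime φ') {z : Pt}
    (hz : z ∈ φ) (hz' : z ∈ φ') (hlt : growthFn φ z < growthFn φ' z)
    (hy' : hc φ z ∈ φ') :
    growthFn φ' (hc φ z) < growthFn φ (hc φ z) ∧
    (growthFn φ' (hc φ z)).toReal < (growthFn φ z).toReal := by
  obtain ⟨hyφ, hne, hnorm, t, ht0, hts, htf, htp⟩ := claimB hφ hz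
  set y := hc φ z
  have hzfin : growthFn φ z ≠ ⊤ := hφ.2.2.2 z hz
  -- the tip lies in z's (longer) segment in φ'
  have hmem : tip (growthFn φ) z ∈ seg z.1 z.2 (growthFn φ' z) :=
    ⟨(growthFn φ z).toReal, ENNReal.toReal_nonneg, by rwa [ENNReal.ofReal_toReal hzfin], rfl⟩
  -- hard-core in φ'
  have hdis := (growthFn_isGF hφ'.2.2.1).1 z hz' y hy' hne
  have hnotmem : tip (growthFn φ) z ∉ seg y.1 y.2 (growthFn φ' y) := by
    intro hm
    exact Set.eq_empty_iff_forall_notMem.mp hdis _ ⟨hmem, hm⟩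
  have hle : growthFn φ' y ≤ ENNReal.ofReal t := by
    by_contra hcon
    push_neg at hcon
    exact hnotmem ⟨t, ht0, hcon, htp⟩
  constructor
  · exact lt_of_le_of_lt hle htf
  · calc (growthFn φ' y).toReal ≤ (ENNReal.ofReal t).toReal :=
          ENNReal.toReal_mono ENNReal.ofReal_ne_top hle
      _ = t := ENNReal.toReal_ofReal ht0
      _ < _ := hts
/-- Lemma on descending chains produced by comparing two
configurations.  Let `φ, φ′ ∈ N′` and `x₁ ∈ φ ∩ φ′` with `f_φ(x₁) < f_{φ′}(x₁)`.
Define recursively `x_{i+1} = h_c(φ, x_i)` if `x_i ∈ φ` and `x_{i+1} = x_i` otherwise,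
for odd `i`, and `x_{i+1} = h_c(φ′, x_i)` if `x_i ∈ φ′` and `x_{i+1} = x_i` otherwise,
for even `i`.  Then there is a minimal index `i₀ ≥ 1` with `x_{i₀} ∉ φ ∩ φ′` (in
particular `i₀ < ∞`), the spatial positions of `(x_i)_{1 ≤ i ≤ i₀}` are pairwise
distinct and form an `f_φ(x₁)`-bounded anisotropic descending chain, and
`f_φ(x_i) < f_{φ′}(x_i)` for odd `i ∈ {1, …, i₀ − 1}` while `f_{φ′}(x_i) < f_φ(x_i)`
for even `i ∈ {1, …, i₀ − 1}`. -/
theorem descending_chain_of_growth_difference (φ φ' : Set Pt)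
    (hφ : Nprime φ) (hφ' : Nprime φ') (x : ℕ → Pt)
    (hx1 : x 1 ∈ φ ∩ φ') (hlt : growthFn φ (x 1) < growthFn φ' (x 1))
    (hodd : ∀ i : ℕ, 1 ≤ i → Odd i →
      (x i ∈ φ → x (i + 1) = hc φ (x i)) ∧ (x i ∉ φ → x (i + 1) = x i))
    (heven : ∀ i : ℕ, 1 ≤ i → Even i →
      (x i ∈ φ' → x (i + 1) = hc φ' (x i)) ∧ (x i ∉ φ' → x (i + 1) = x i)) :
    ∃ i₀ : ℕ, 1 ≤ i₀ ∧ x i₀ ∉ φ ∩ φ' ∧ (∀ j, 1 ≤ j → j < i₀ → x j ∈ φ ∩ φ') ∧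
      2 ≤ i₀ ∧
      -- the spatial positions of `(x_i)_{1 ≤ i ≤ i₀}` are pairwise distinct
      (∀ i j, 1 ≤ i → i < j → j ≤ i₀ → (x i).1 ≠ (x j).1) ∧
      -- they form an `f_φ(x₁)`-bounded anisotropic descending chain
      ‖(x 1).1 - (x 2).1‖ ≤ (growthFn φ (x 1)).toReal ∧
      (∀ i, 2 ≤ i → i + 1 ≤ i₀ → ‖(x (i + 1)).1 - (x i).1‖ < ‖(x i).1 - (x (i - 1)).1‖) ∧
      -- parity of the growth comparisons along the chain
      (∀ i, 1 ≤ i → i < i₀ → Odd i → growthFn φ (x i) < growthFn φ' (x i)) ∧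
      (∀ i, 1 ≤ i → i < i₀ → Even i → growthFn φ' (x i) < growthFn φ (x i)) := by
  classical
  have par : ∀ i, 1 ≤ i → (∀ j, 1 ≤ j → j ≤ i → x j ∈ φ ∩ φ') →
      (Odd i → growthFn φ (x i) < growthFn φ' (x i)) ∧
      (Even i → growthFn φ' (x i) < growthFn φ (x i)) := by
    intro i hi
    induction i, hi using Nat.le_induction with
    | base =>
      exact fun _ => ⟨fun _ => hlt, fun h => absurd h (by simp)⟩
    | succ n hn ih =>
      intro hall
      have hist : ∀ j, 1 ≤ j → j ≤ n → x j ∈ φ ∩ φ' := fun j a b => hall j a (b.trans n.le_succ)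
      have hxn := hall n hn n.le_succ
      have hxn1 := hall (n + 1) (by omega) le_rfl
      rcases Nat.even_or_odd n with he | ho
      · have hfn := (ih hist).2 he
        have hx : x (n + 1) = hc φ' (x n) := (heven n hn he).1 hxn.2
        have hst := step hφ' hφ hxn.2 hxn.1 hfn (by rw [← hx]; exact hxn1.1)
        rw [← hx] at hst
        exact ⟨fun _ => hst.1, fun hev => (Nat.not_odd_iff_even.mpr hev he.add_one).elim⟩
      · have hfn := (ih hist).1 ho
        have hx : x (n + 1) = hc φ (x n) := (hodd n hn ho).1 hxn.1
        have hst := step hφ hφ' hxn.1 hxn.2 hfn (by rw [← hx]; exact hxn1.2)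
        rw [← hx] at hst
        exact ⟨fun ho1 => (Nat.not_odd_iff_even.mpr ho.add_one ho1).elim, fun _ => hst.1⟩
  have dval : ∀ i, 1 ≤ i → x i ∈ φ ∩ φ' →
      (Odd i → ‖(x i).1 - (x (i + 1)).1‖ = (growthFn φ (x i)).toReal) ∧
      (Even i → ‖(x i).1 - (x (i + 1)).1‖ = (growthFn φ' (x i)).toReal) := by
    intro i hi hxi
    constructor
    · intro ho
      rw [(hodd i hi ho).1 hxi.1]
      exact (claimB hφ hxi.1).2.2.1
    · intro he
      rw [(heven i hi he).1 hxi.2]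
      exact (claimB hφ' hxi.2).2.2.1
  have dec : ∀ i, 1 ≤ i → (∀ j, 1 ≤ j → j ≤ i + 1 → x j ∈ φ ∩ φ') →
      ‖(x (i + 2)).1 - (x (i + 1)).1‖ < ‖(x (i + 1)).1 - (x i).1‖ := by
    intro i hi hall
    have hxi := hall i hi (by omega)
    have hxi1 := hall (i + 1) (by omega) le_rfl
    have hallsub : ∀ j, 1 ≤ j → j ≤ i → x j ∈ φ ∩ φ' := fun j a b => hall j a (by omega)
    rcases Nat.even_or_odd i with he | ho
    · have hfi := (par i hi hallsub).2 he
      have hx : x (i + 1) = hc φ' (x i) := (heven i hi he).1 hxi.2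
      have hst := step hφ' hφ hxi.2 hxi.1 hfi (by rw [← hx]; exact hxi1.1)
      rw [← hx] at hst
      have hdi := (dval i hi hxi).2 he
      have hdi1 := (dval (i + 1) (by omega) hxi1).1 he.add_one
      calc ‖(x (i + 2)).1 - (x (i + 1)).1‖ = ‖(x (i + 1)).1 - (x (i + 1 + 1)).1‖ :=
            (norm_sub_rev _ _)
        _ = (growthFn φ (x (i + 1))).toReal := hdi1
        _ < (growthFn φ' (x i)).toReal := hst.2
        _ = ‖(x i).1 - (x (i + 1)).1‖ := hdi.symm
        _ = ‖(x (i + 1)).1 - (x i).1‖ := norm_sub_rev _ _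
    · have hfi := (par i hi hallsub).1 ho
      have hx : x (i + 1) = hc φ (x i) := (hodd i hi ho).1 hxi.1
      have hst := step hφ hφ' hxi.1 hxi.2 hfi (by rw [← hx]; exact hxi1.2)
      rw [← hx] at hst
      have hdi := (dval i hi hxi).1 ho
      have hdi1 := (dval (i + 1) (by omega) hxi1).2 ho.add_one
      calc ‖(x (i + 2)).1 - (x (i + 1)).1‖ = ‖(x (i + 1)).1 - (x (i + 1 + 1)).1‖ :=
            (norm_sub_rev _ _)
        _ = (growthFn φ' (x (i + 1))).toReal := hdi1
        _ < (growthFn φ (x i)).toReal := hst.2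
        _ = ‖(x i).1 - (x (i + 1)).1‖ := hdi.symm
        _ = ‖(x (i + 1)).1 - (x i).1‖ := norm_sub_rev _ _
  have dmono : ∀ j i, 1 ≤ i → i < j → (∀ k, 1 ≤ k → k ≤ j → x k ∈ φ ∩ φ') →
      ‖(x (j + 1)).1 - (x j).1‖ < ‖(x (i + 1)).1 - (x i).1‖ := by
    intro j
    induction j with
    | zero => intro i h1 h2 _; omega
    | succ n ihn =>
      intro i h1 h2 hall
      rcases Nat.lt_or_ge i n with h | h
      · have hrec := ihn i h1 h (fun k a b => hall k a (by omega))
        have hdec := dec n (by omega) hall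
        exact lt_trans hdec hrec
      · have : i = n := by omega
        subst this
        exact dec i h1 hall
  have dist : ∀ i j, 1 ≤ i → i < j → (∀ k, 1 ≤ k → k ≤ j → x k ∈ φ ∩ φ') →
      (x i).1 ≠ (x j).1 := by
    intro i j h1 hij hall heq
    have hxi := hall i h1 (by omega)
    have hxj := hall j (by omega) le_rfl
    have hpt : x i = x j := by
      by_contra hne
      exact pos_ne hφ hxi.1 hxj.1 hne heq
    have hd := dmono j i h1 hij hall
    have hallsubi : ∀ k, 1 ≤ k → k ≤ i → x k ∈ φ ∩ φ' := fun k a b => hall k a (by omega)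
    rcases Nat.even_or_odd i with hei | hoi <;> rcases Nat.even_or_odd j with hej | hoj
    · have h1' := (dval i h1 hxi).2 hei
      have h2' := (dval j (by omega) hxj).2 hej
      rw [norm_sub_rev (x (j+1)).1, norm_sub_rev (x (i+1)).1, h1', h2', hpt] at hd
      exact lt_irrefl _ hd
    · have ha := (par i h1 hallsubi).2 hei
      have hb := (par j (by omega) hall).1 hoj
      rw [hpt] at ha
      exact lt_irrefl _ (ha.trans hb)
    · have ha := (par i h1 hallsubi).1 hoi
      have hb := (par j (by omega) hall).2 hej
      rw [hpt] at ha
      exact lt_irrefl _ (ha.trans hb)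
    · have h1' := (dval i h1 hxi).1 hoi
      have h2' := (dval j (by omega) hxj).1 hoj
      rw [norm_sub_rev (x (j+1)).1, norm_sub_rev (x (i+1)).1, h1', h2', hpt] at hd
      exact lt_irrefl _ hd
  have hexists : ∃ i, 1 ≤ i ∧ x i ∉ φ ∩ φ' := by
    by_contra hcon
    push_neg at hcon
    apply hφ.2.1.2.2.1
    refine ⟨(growthFn φ (x 1)).toReal, ?_, fun i => (x (i + 1)).1, ?_, ?_, ?_, ?_⟩
    · exact ENNReal.toReal_pos (ne_of_gt (growthFn_pos hφ hx1.1)) (hφ.2.2.2 _ hx1.1)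
    · intro i j hij
      by_contra hne
      rcases Nat.lt_or_ge i j with h | h
      · exact dist (i + 1) (j + 1) (by omega) (by omega) (fun k a _ => hcon k a) hij
      · exact dist (j + 1) (i + 1) (by omega) (by omega) (fun k a _ => hcon k a) hij.symm
    · exact fun i => ⟨x (i + 1), (hcon (i + 1) (by omega)).1, rfl⟩
    · exact le_of_eq ((dval 1 le_rfl hx1).1 odd_one)
    · intro i hi
      show ‖(x (i + 1 + 1)).1 - (x (i + 1)).1‖ < ‖(x (i + 1)).1 - (x (i - 1 + 1)).1‖
      rw [Nat.sub_add_cancel hi]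
      exact dec i hi (fun k a _ => hcon k a)
  have hmin : ∀ j, 1 ≤ j → j < Nat.find hexists → x j ∈ φ ∩ φ' := by
    intro j a b
    by_contra hcj
    exact Nat.find_min hexists b ⟨a, hcj⟩
  have h2 : 2 ≤ Nat.find hexists := by
    rcases Nat.lt_or_ge (Nat.find hexists) 2 with h | h
    · exfalso
      have h1 := (Nat.find_spec hexists).1
      have he1 : Nat.find hexists = 1 := by omega
      exact (he1 ▸ (Nat.find_spec hexists).2) hx1
    · exact h
  refine ⟨Nat.find hexists, (Nat.find_spec hexists).1, (Nat.find_spec hexists).2, hmin, h2,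
    ?_, ?_, ?_, ?_, ?_⟩
  · -- pairwise distinct positions
    intro i j h1 hij hj
    rcases eq_or_lt_of_le hj with heq | hlt2
    · intro hpos
      have hxi := hmin i h1 (by omega)
      have hxj : x j ∉ φ ∩ φ' := heq ▸ (Nat.find_spec hexists).2
      have hne : x i ≠ x j := fun hpt => hxj (hpt ▸ hxi)
      obtain ⟨m, rfl⟩ : ∃ m, j = m + 1 := ⟨j - 1, by omega⟩
      have hxm := hmin m (by omega) (by omega)
      rcases Nat.even_or_odd m with he | ho
      · have hx : x (m + 1) = hc φ' (x m) := (heven m (by omega) he).1 hxm.2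
        have hyin : x (m + 1) ∈ φ' := by rw [hx]; exact (hc_spec hφ' hxm.2).1
        exact pos_ne hφ' hxi.2 hyin hne hpos
      · have hx : x (m + 1) = hc φ (x m) := (hodd m (by omega) ho).1 hxm.1
        have hyin : x (m + 1) ∈ φ := by rw [hx]; exact (hc_spec hφ hxm.1).1
        exact pos_ne hφ hxi.1 hyin hne hpos
    · exact dist i j h1 hij (fun k a b => hmin k a (by omega))
  · -- bound
    exact le_of_eq ((dval 1 le_rfl hx1).1 odd_one)
  · -- descending
    intro i h2i hi1
    obtain ⟨m, rfl⟩ : ∃ m, i = m + 2 := ⟨i - 2, by omega⟩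
    have hsub : m + 2 - 1 = m + 1 := by omega
    rw [hsub]
    exact dec (m + 1) (by omega) (fun k a b => hmin k a (by omega))
  · -- odd comparisons
    intro i h1 hlt' ho
    exact (par i h1 (fun k a b => hmin k a (by omega))).1 ho
  · -- even comparisons
    intro i h1 hlt' he
    exact (par i h1 (fun k a b => hmin k a (by omega))).2 he
end Lilypond
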